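/- The grounded labelling of a finite argumentation framework is the unique argument labelling that is both strongly admissible and complete. -/
import Mathlib


inductive Label where
  | inn | out | und
deriving DecidableEq

/-- A labelling is admissible if every in-labelled argument has all its attackers
labelled out, and every out-labelled argument has at least one in-labelled attacker. -/
def Admissible {Ar : Type*} (att : Ar → Ar → Prop) (L : Ar → Label) : Prop :=
  (∀ x, L x = Label.inn → ∀ y, att y x → L y = Label.out) ∧
  (∀ x, L x = Label.out → ∃ y, att y x ∧ L y = Label.inn)

/-- A min-max numbering (with only natural-number values): in-arguments are numbered
1 + max of the numbers of their out-labelled attackers (max ∅ = 0), and out-arguments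
1 + min of the numbers of their in-labelled attackers. -/
def IsMinMax {Ar : Type*} (att : Ar → Ar → Prop) (L : Ar → Label) (MM : Ar → ℕ) : Prop :=
  (∀ x, L x = Label.inn → MM x = sSup (MM '' {y | att y x ∧ L y = Label.out}) + 1) ∧
  (∀ x, L x = Label.out → MM x = sInf (MM '' {y | att y x ∧ L y = Label.inn}) + 1)

/-- Strongly admissible: admissible and admitting a min-max numbering with only
natural-number (finite) values. -/
def StronglyAdmissible {Ar : Type*} (att : Ar → Ar → Prop) (L : Ar → Label) : Prop :=
  Admissible att L ∧ ∃ MM : Ar → ℕ, IsMinMax att L MM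

/-- Complete labelling: admissible, and every undec argument has an undec attacker
and no in-labelled attacker. -/
def CompleteLab {Ar : Type*} (att : Ar → Ar → Prop) (L : Ar → Label) : Prop :=
  Admissible att L ∧
  ∀ x, L x = Label.und →
    (∃ y, att y x ∧ L y = Label.und) ∧ ∀ y, att y x → L y ≠ Label.inn

/-- The order on labellings: Lab1 ⊑ Lab2 iff in(Lab1) ⊆ in(Lab2) and out(Lab1) ⊆ out(Lab2). -/
def LabLe {Ar : Type*} (L1 L2 : Ar → Label) : Prop :=
  (∀ x, L1 x = Label.inn → L2 x = Label.inn) ∧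
  (∀ x, L1 x = Label.out → L2 x = Label.out)

namespace AFaux

variable {Ar : Type*}

def stage (att : Ar → Ar → Prop) : ℕ → Set Ar × Set Ar
  | 0 => (∅, ∅)
  | n+1 => ({x | ∀ y, att y x → y ∈ (stage att n).2},
            {x | ∃ y, att y x ∧ y ∈ (stage att n).1})

variable (att : Ar → Ar → Prop)

lemma stage_mono : ∀ n, (stage att n).1 ⊆ (stage att (n+1)).1 ∧
    (stage att n).2 ⊆ (stage att (n+1)).2 := by
  intro n
  induction n with
  | zero => exact ⟨fun x hx => hx.elim, fun x hx => hx.elim⟩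
  | succ n ih =>
    refine ⟨fun x hx y hy => ih.2 (hx y hy), fun x ⟨y, hy, hyI⟩ => ⟨y, hy, ih.1 hyI⟩⟩

lemma stage_le {m n : ℕ} (h : m ≤ n) : (stage att m).1 ⊆ (stage att n).1 ∧
    (stage att m).2 ⊆ (stage att n).2 := by
  induction h with
  | refl => exact ⟨subset_rfl, subset_rfl⟩
  | step h ih => exact ⟨ih.1.trans (stage_mono att _).1, ih.2.trans (stage_mono att _).2⟩

lemma stage_disj : ∀ k n m (x : Ar), n + m ≤ k → x ∈ (stage att n).1 →
    x ∈ (stage att m).2 → False := by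
  intro k
  induction k with
  | zero =>
    intro n m x hk h1 h2
    obtain rfl : n = 0 := by omega
    exact h1.elim
  | succ k ih =>
    intro n m x hk h1 h2
    match n, m with
    | 0, _ => exact h1.elim
    | _, 0 => exact h2.elim
    | n+1, m+1 =>
      obtain ⟨y, hy, hyI⟩ := h2
      exact ih m n y (by omega) hyI (h1 y hy)

open Classical in
noncomputable def Lg : Ar → Label := fun x =>
  if x ∈ ⋃ n, (stage att n).1 then Label.inn
  else if x ∈ ⋃ n, (stage att n).2 then Label.out else Label.und

lemma Lg_inn_iff (x : Ar) : Lg att x = Label.inn ↔ x ∈ ⋃ n, (stage att n).1 := by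
  unfold Lg
  split
  · simp_all
  · split <;> simp_all

lemma Lg_out_iff (x : Ar) : Lg att x = Label.out ↔
    (x ∈ ⋃ n, (stage att n).2 ∧ x ∉ ⋃ n, (stage att n).1) := by
  unfold Lg
  split
  · simp_all
  · split <;> simp_all

lemma Lg_out_of_mem {x : Ar} (h : x ∈ ⋃ n, (stage att n).2) : Lg att x = Label.out := by
  rw [Lg_out_iff]
  refine ⟨h, fun hI => ?_⟩
  simp only [Set.mem_iUnion] at h hI
  obtain ⟨n, hn⟩ := hI
  obtain ⟨m, hm⟩ := h
  exact stage_disj att (n+m) n m x le_rfl hn hm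

noncomputable def mm : Ar → ℕ := fun x => sInf {n | x ∈ (stage att n).1 ∪ (stage att n).2}

lemma mm_spec_inn {x : Ar} (h : Lg att x = Label.inn) :
    x ∈ (stage att (mm att x)).1 ∧ ∀ k < mm att x, x ∉ (stage att k).1 := by
  rw [Lg_inn_iff] at h
  simp only [Set.mem_iUnion] at h
  obtain ⟨n, hn⟩ := h
  have hne : {k | x ∈ (stage att k).1 ∪ (stage att k).2}.Nonempty := ⟨n, Or.inl hn⟩
  have hmem := Nat.sInf_mem hne
  constructor
  · rcases hmem with h1 | h2
    · exact h1
    · exact absurd h2 (fun h2 => stage_disj att _ n (mm att x) x le_rfl hn h2)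
  · intro k hk hkI
    exact Nat.notMem_of_lt_sInf hk (Or.inl hkI)

lemma mm_spec_out {x : Ar} (h : Lg att x = Label.out) :
    x ∈ (stage att (mm att x)).2 ∧ ∀ k < mm att x, x ∉ (stage att k).2 := by
  rw [Lg_out_iff] at h
  obtain ⟨hO, hI⟩ := h
  simp only [Set.mem_iUnion] at hO
  obtain ⟨n, hn⟩ := hO
  have hne : {k | x ∈ (stage att k).1 ∪ (stage att k).2}.Nonempty := ⟨n, Or.inr hn⟩
  have hmem := Nat.sInf_mem hne
  constructor
  · rcases hmem with h1 | h2
    · exact absurd h1 (fun h1 => hI (Set.mem_iUnion.2 ⟨_, h1⟩))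
    · exact h2
  · intro k hk hkO
    exact Nat.notMem_of_lt_sInf hk (Or.inr hkO)

lemma mm_le {x : Ar} {n : ℕ} (h : x ∈ (stage att n).1 ∪ (stage att n).2) : mm att x ≤ n :=
  Nat.sInf_le h

lemma Lg_complete [Fintype Ar] : CompleteLab att (Lg att) := by
  have hnoinn : ∀ x, Lg att x = Label.und → ∀ y, att y x → Lg att y ≠ Label.inn := by
    intro x hx y hy hyinn
    rw [Lg_inn_iff] at hyinn
    simp only [Set.mem_iUnion] at hyinn
    obtain ⟨n, hn⟩ := hyinn
    have : x ∈ (stage att (n+1)).2 := ⟨y, hy, hn⟩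
    have := Lg_out_of_mem att (Set.mem_iUnion.2 ⟨n+1, this⟩)
    rw [this] at hx; exact Label.noConfusion hx
  refine ⟨⟨?_, ?_⟩, ?_⟩
  · intro x hx y hy
    rw [Lg_inn_iff] at hx
    simp only [Set.mem_iUnion] at hx
    obtain ⟨n, hn⟩ := hx
    match n, hn with
    | n+1, hn => exact Lg_out_of_mem att (Set.mem_iUnion.2 ⟨n, hn y hy⟩)
  · intro x hx
    obtain ⟨hO, -⟩ := (Lg_out_iff att x).1 hx
    simp only [Set.mem_iUnion] at hO
    obtain ⟨n, hn⟩ := hO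
    match n, hn with
    | n+1, ⟨y, hy, hyI⟩ =>
      exact ⟨y, hy, (Lg_inn_iff att y).2 (Set.mem_iUnion.2 ⟨n, hyI⟩)⟩
  · intro x hx
    refine ⟨?_, hnoinn x hx⟩
    by_contra hno
    push_neg at hno
    -- every attacker is inn or out; no attacker is inn, so all out
    have hallout : ∀ y, att y x → Lg att y = Label.out := by
      intro y hy
      have h1 := hnoinn x hx y hy
      have h2 := hno y hy
      cases hLy : Lg att y
      · exact absurd hLy h1
      · rfl
      · exact absurd hLy h2
    set N := Finset.univ.sup (fun y : Ar => mm att y) with hN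
    have : x ∈ (stage att (N+1)).1 := by
      intro y hy
      have hy' := hallout y hy
      have := (mm_spec_out att hy').1
      exact (stage_le att (Finset.le_sup (Finset.mem_univ y))).2 this
    have : Lg att x = Label.inn := (Lg_inn_iff att x).2 (Set.mem_iUnion.2 ⟨N+1, this⟩)
    rw [this] at hx; exact Label.noConfusion hx

lemma Lg_minmax [Fintype Ar] : IsMinMax att (Lg att) (mm att) := by
  constructor
  · intro x hx
    obtain ⟨hmem, hmin⟩ := mm_spec_inn att hx
    match hn : mm att x, hmem, hmin with
    | 0, hmem, hmin => exact hmem.elim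
    | n'+1, hmem, hmin =>
      have hatt : ∀ y, att y x → y ∈ (stage att n').2 := hmem
      have hattout : ∀ y, att y x → Lg att y = Label.out := fun y hy =>
        Lg_out_of_mem att (Set.mem_iUnion.2 ⟨n', hatt y hy⟩)
      have hsup : sSup (mm att '' {y | att y x ∧ Lg att y = Label.out}) = n' := by
        have hub : ∀ v ∈ mm att '' {y | att y x ∧ Lg att y = Label.out}, v ≤ n' := by
          rintro v ⟨y, ⟨hy, -⟩, rfl⟩
          exact mm_le att (Or.inr (hatt y hy))
        match n' with
        | 0 =>
          have : {y | att y x ∧ Lg att y = Label.out} = ∅ := by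
            ext y; simp only [Set.mem_setOf_eq, Set.mem_empty_iff_false, iff_false]
            rintro ⟨hy, -⟩; exact (hatt y hy)
          rw [this]; simp
        | k+1 =>
          have hxk : x ∉ (stage att (k+1)).1 := hmin (k+1) (by omega)
          have : ∃ y, att y x ∧ y ∉ (stage att k).2 := by
            by_contra hc; push_neg at hc; exact hxk hc
          obtain ⟨y, hy, hyk⟩ := this
          have hyout := hattout y hy
          have h1 : mm att y ≤ k+1 := mm_le att (Or.inr (hatt y hy))
          have h2 : k+1 ≤ mm att y := by
            by_contra hlt; push_neg at hlt
            have hs := (mm_spec_out att hyout).1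
            exact hyk ((stage_le att (by omega : mm att y ≤ k)).2 hs)
          have hy' : mm att y = k+1 := le_antisymm h1 h2
          refine le_antisymm (csSup_le ⟨_, ⟨y, ⟨hy, hyout⟩, rfl⟩⟩ hub) ?_
          calc (k+1 : ℕ) = mm att y := hy'.symm
            _ ≤ sSup (mm att '' {z | att z x ∧ Lg att z = Label.out}) :=
              le_csSup (Set.Finite.bddAbove (Set.toFinite _)) ⟨y, ⟨hy, hyout⟩, rfl⟩
      rw [hsup]
  · intro x hx
    obtain ⟨hmem, hmin⟩ := mm_spec_out att hx
    match hn : mm att x, hmem, hmin with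
    | 0, hmem, hmin => exact hmem.elim
    | n'+1, hmem, hmin =>
      obtain ⟨y, hy, hyI⟩ := hmem
      have hyinn : Lg att y = Label.inn := (Lg_inn_iff att y).2 (Set.mem_iUnion.2 ⟨n', hyI⟩)
      have hlb : ∀ v ∈ mm att '' {z | att z x ∧ Lg att z = Label.inn}, n' ≤ v := by
        rintro v ⟨z, ⟨hz, hzinn⟩, rfl⟩
        by_contra hlt; push_neg at hlt
        have hzI := (mm_spec_inn att hzinn).1
        have hxO : x ∈ (stage att (mm att z + 1)).2 := ⟨z, hz, hzI⟩
        exact hmin (mm att z + 1) (by omega) hxO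
      have hinf : sInf (mm att '' {z | att z x ∧ Lg att z = Label.inn}) = n' := by
        refine le_antisymm ?_ (le_csInf ⟨_, ⟨y, ⟨hy, hyinn⟩, rfl⟩⟩ hlb)
        calc sInf (mm att '' {z | att z x ∧ Lg att z = Label.inn}) ≤ mm att y :=
              Nat.sInf_le ⟨y, ⟨hy, hyinn⟩, rfl⟩
          _ ≤ n' := mm_le att (Or.inl hyI)
      rw [hinf]

lemma comp_inn {Lgr : Ar → Label} (h : CompleteLab att Lgr) (x : Ar)
    (hall : ∀ y, att y x → Lgr y = Label.out) : Lgr x = Label.inn := by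
  cases hc : Lgr x with
  | inn => rfl
  | out =>
    obtain ⟨y, hy, hyi⟩ := h.1.2 x hc
    rw [hall y hy] at hyi; exact Label.noConfusion hyi
  | und =>
    obtain ⟨⟨y, hy, hyu⟩, -⟩ := h.2 x hc
    rw [hall y hy] at hyu; exact Label.noConfusion hyu

lemma comp_out {Lgr : Ar → Label} (h : CompleteLab att Lgr) (x y : Ar)
    (hy : att y x) (hyi : Lgr y = Label.inn) : Lgr x = Label.out := by
  cases hc : Lgr x with
  | out => rfl
  | inn =>
    have := h.1.1 x hc y hy
    rw [hyi] at this; exact Label.noConfusion this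
  | und => exact absurd hyi ((h.2 x hc).2 y hy)

lemma sa_le [Fintype Ar] {L Lgr : Ar → Label} (hL : StronglyAdmissible att L)
    (hgr : CompleteLab att Lgr) : LabLe L Lgr := by
  obtain ⟨hadm, MM, hmm⟩ := hL
  have key : ∀ n x, MM x = n → (L x = Label.inn → Lgr x = Label.inn) ∧
      (L x = Label.out → Lgr x = Label.out) := by
    intro n
    induction n using Nat.strong_induction_on with
    | _ n IH =>
      intro x hx
      constructor
      · intro hxi
        refine comp_inn att hgr x (fun y hy => ?_)
        have hyo : L y = Label.out := hadm.1 x hxi y hy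
        have hyle : MM y < n := by
          have h1 : MM y ≤ sSup (MM '' {z | att z x ∧ L z = Label.out}) :=
            le_csSup (Set.Finite.bddAbove (Set.toFinite _)) ⟨y, ⟨hy, hyo⟩, rfl⟩
          have h2 := hmm.1 x hxi
          omega
        exact (IH (MM y) hyle y rfl).2 hyo
      · intro hxo
        obtain ⟨y, hy, hyi⟩ := hadm.2 x hxo
        have hne : (MM '' {z | att z x ∧ L z = Label.inn}).Nonempty := ⟨_, ⟨y, ⟨hy, hyi⟩, rfl⟩⟩
        obtain ⟨z, ⟨hz, hzi⟩, hzm⟩ := Nat.sInf_mem hne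
        have hzlt : MM z < n := by
          have h2 := hmm.2 x hxo
          omega
        have := (IH (MM z) hzlt z rfl).1 hzi
        exact comp_out att hgr x z hz this
  exact ⟨fun x hx => (key (MM x) x rfl).1 hx, fun x hx => (key (MM x) x rfl).2 hx⟩

lemma lab_antisymm {L1 L2 : Ar → Label} (h12 : LabLe L1 L2) (h21 : LabLe L2 L1) :
    L1 = L2 := by
  funext x
  cases h1 : L1 x with
  | inn => exact (h12.1 x h1).symm
  | out => exact (h12.2 x h1).symm
  | und =>
    cases h2 : L2 x with
    | inn => rw [h21.1 x h2] at h1; exact Label.noConfusion h1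
    | out => rw [h21.2 x h2] at h1; exact Label.noConfusion h1
    | und => rfl

end AFaux

/-- The grounded labelling of a finite argumentation framework is the
unique argument labelling that is both strongly admissible and complete. -/
theorem grounded_unique_strongly_admissible_complete
    {Ar : Type*} [Fintype Ar] (att : Ar → Ar → Prop) (Lgr : Ar → Label)
    (hgr : CompleteLab att Lgr ∧ ∀ L, CompleteLab att L → LabLe Lgr L) :
    ∀ L : Ar → Label, (StronglyAdmissible att L ∧ CompleteLab att L) ↔ L = Lgr := by
  intro L
  constructor
  · rintro ⟨hsa, hc⟩
    exact AFaux.lab_antisymm (AFaux.sa_le att hsa hgr.1) (hgr.2 L hc)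
  · rintro rfl
    refine ⟨?_, hgr.1⟩
    have hLgc := AFaux.Lg_complete att
    have hLgsa : StronglyAdmissible att (AFaux.Lg att) :=
      ⟨hLgc.1, AFaux.mm att, AFaux.Lg_minmax att⟩
    have heq : AFaux.Lg att = L :=
      AFaux.lab_antisymm (AFaux.sa_le att hLgsa hgr.1) (hgr.2 _ hLgc)
    rw [← heq]
    exact hLgsa
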